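/- arXiv:1307.2652 — 3 statements merged into one kernel-verified Lean document; each statement's English description precedes it below -/
import Mathlib

section
/- Let k(z,z) = (1 - |θ(z)|²)/(1 - |z|²) where θ is a holomorphic self-map of the unit disk with |θ(z)| ≤ 1. Then for all z in the open unit disk, Δ k(z,z) ≤ 4 (1+|z|)² (1-|θ(z)|²)/(1-|z|²)³, where Δ is the Laplacian in z acting on the function z ↦ k(z,z). -/
open Metric Set Complex Filter Topology

lemma nsq_eq (a : ℂ) : Complex.normSq a = ‖a‖ ^ 2 := by
  rw [Complex.normSq_eq_norm_sq]

noncomputable def mob (a w : ℂ) : ℂ := (w - a) / (1 - (starRingEnd ℂ) a * w)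

lemma mob_den_ne (a w : ℂ) (ha : ‖a‖ < 1) (hw : ‖w‖ < 1) : 1 - (starRingEnd ℂ) a * w ≠ 0 := by
  intro h
  have h2 : ‖(starRingEnd ℂ) a * w‖ < 1 := by
    rw [norm_mul, RCLike.norm_conj]
    nlinarith [norm_nonneg a, norm_nonneg w]
  have h1 : (1:ℂ) = (starRingEnd ℂ) a * w := by linear_combination h
  rw [← h1] at h2
  simp at h2

lemma mob_normSq (a w : ℂ) :
    normSq (1 - (starRingEnd ℂ) a * w) - normSq (w - a)
      = (1 - normSq a) * (1 - normSq w) := by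
  have h : ((normSq (1 - (starRingEnd ℂ) a * w) : ℂ)) - (normSq (w - a) : ℂ)
      = ((1 - normSq a : ℝ) : ℂ) * ((1 - normSq w : ℝ) : ℂ) := by
    push_cast [← Complex.mul_conj]
    simp only [map_sub, map_mul, map_one, Complex.conj_conj]
    ring
  exact_mod_cast h

lemma mob_mapsTo (a : ℂ) (ha : ‖a‖ < 1) : MapsTo (mob a) (ball 0 1) (ball 0 1) := by
  intro w hw
  rw [mem_ball_zero_iff] at hw ⊢
  have hden := mob_den_ne a w ha hw
  have h1 := mob_normSq a w
  have ha' : normSq a < 1 := by rw [nsq_eq]; nlinarith [norm_nonneg a]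
  have hw' : normSq w < 1 := by rw [nsq_eq]; nlinarith [norm_nonneg w]
  have hlt : normSq (w - a) < normSq (1 - (starRingEnd ℂ) a * w) := by nlinarith
  have hpos : 0 < normSq (1 - (starRingEnd ℂ) a * w) := normSq_pos.mpr hden
  rw [mob, norm_div, div_lt_one (norm_pos_iff.mpr hden)]
  refine lt_of_pow_lt_pow_left₀ 2 (norm_nonneg _) ?_
  rw [← nsq_eq, ← nsq_eq]; exact hlt

lemma mob_hasDerivAt (a w : ℂ) (hden : 1 - (starRingEnd ℂ) a * w ≠ 0) :
    HasDerivAt (mob a) ((1 - normSq a) / (1 - (starRingEnd ℂ) a * w) ^ 2) w := by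
  have h1 : HasDerivAt (fun w : ℂ => w - a) 1 w := (hasDerivAt_id w).sub_const a
  have h2 : HasDerivAt (fun w : ℂ => 1 - (starRingEnd ℂ) a * w) (-((starRingEnd ℂ) a)) w := by
    simpa using ((hasDerivAt_id w).const_mul ((starRingEnd ℂ) a)).const_sub 1
  have := h1.fun_div h2 hden
  refine this.congr_deriv ?_
  congr 1
  rw [← Complex.mul_conj]
  ring

lemma mob_diffOn (a : ℂ) (ha : ‖a‖ < 1) : DifferentiableOn ℂ (mob a) (ball 0 1) := by
  intro w hw
  exact ((mob_hasDerivAt a w (mob_den_ne a w ha (mem_ball_zero_iff.mp hw))).differentiableAt).differentiableWithinAt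

example : True := trivial

lemma schwarz_pick_strict (f : ℂ → ℂ) (hf : DifferentiableOn ℂ f (ball 0 1))
    (hm : MapsTo f (ball 0 1) (ball 0 1)) (z : ℂ) (hz : z ∈ ball (0:ℂ) 1) :
    ‖deriv f z‖ * (1 - ‖z‖ ^ 2) ≤ 1 - ‖f z‖ ^ 2 := by
  have hz' : ‖z‖ < 1 := mem_ball_zero_iff.mp hz
  set c := f z with hc_def
  have hc : ‖c‖ < 1 := mem_ball_zero_iff.mp (hm hz)
  have hnz : ‖-z‖ < 1 := by rwa [norm_neg]
  have hφm : MapsTo (mob (-z)) (ball 0 1) (ball 0 1) := mob_mapsTo (-z) hnz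
  have hφ0 : mob (-z) 0 = z := by simp [mob]
  set F : ℂ → ℂ := fun w => mob c (f (mob (-z) w)) with hF_def
  have hFd : DifferentiableOn ℂ F (ball 0 1) :=
    (mob_diffOn c hc).comp (hf.comp (mob_diffOn (-z) hnz) hφm) (hm.comp hφm)
  have hFm : MapsTo F (ball 0 1) (ball 0 1) := (mob_mapsTo c hc).comp (hm.comp hφm)
  have hF0 : F 0 = 0 := by simp [hF_def, hφ0, mob, hc_def]
  -- derivative of F at 0
  have hφd : HasDerivAt (mob (-z)) ((1 - normSq (-z)) / (1 - (starRingEnd ℂ) (-z) * 0) ^ 2) 0 :=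
    mob_hasDerivAt (-z) 0 (by simp)
  have hφd' : HasDerivAt (mob (-z)) ((1 - (normSq z : ℂ))) 0 := by
    simpa [normSq_neg] using hφd
  have hfd : HasDerivAt f (deriv f z) (mob (-z) 0) := by
    rw [hφ0]
    exact ((hf.differentiableAt (isOpen_ball.mem_nhds hz)).hasDerivAt)
  have hψd : HasDerivAt (mob c) ((1 - normSq c) / (1 - (starRingEnd ℂ) c * c) ^ 2)
      (f (mob (-z) 0)) := by
    rw [hφ0, ← hc_def]
    exact mob_hasDerivAt c c (mob_den_ne c c hc hc)
  have hcomp1 : HasDerivAt (fun w => f (mob (-z) w)) (deriv f z * (1 - (normSq z : ℂ))) 0 :=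
    HasDerivAt.comp 0 hfd hφd'
  have hcomp2 : HasDerivAt F
      ((1 - normSq c) / (1 - (starRingEnd ℂ) c * c) ^ 2 * (deriv f z * (1 - (normSq z : ℂ)))) 0 :=
    by have := HasDerivAt.comp 0 hψd hcomp1; exact this
  have hb1 : ‖deriv F 0‖ ≤ 1 := by
    have := Complex.norm_deriv_le_one_of_mapsTo_ball hFd
      (by rw [hF0]; exact hFm.mono_right ball_subset_closedBall) one_pos
    exact this
  rw [hcomp2.deriv] at hb1
  have hncpos : (0:ℝ) < 1 - normSq c := by
    have : normSq c < 1 := by rw [nsq_eq]; nlinarith [norm_nonneg c]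
    linarith
  have hcc : (starRingEnd ℂ) c * c = (normSq c : ℂ) := by
    rw [mul_comm, Complex.mul_conj]
  rw [hcc] at hb1
  have hne : (1 - (normSq c : ℂ)) ≠ 0 := by
    intro h
    have : (1:ℝ) - normSq c = 0 := by exact_mod_cast h
    linarith
  have hval : (1 - (normSq c : ℂ)) / (1 - (normSq c : ℂ)) ^ 2 * (deriv f z * (1 - (normSq z : ℂ)))
      = deriv f z * (1 - (normSq z : ℂ)) / (1 - (normSq c : ℂ)) := by
    field_simp
  rw [hval] at hb1
  have hnzpos : (0:ℝ) ≤ 1 - normSq z := by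
    have : normSq z < 1 := by rw [nsq_eq]; nlinarith [norm_nonneg z]
    linarith
  rw [norm_div, norm_mul] at hb1
  have e1 : ‖(1 - (normSq z : ℂ))‖ = 1 - normSq z := by
    rw [show (1 - (normSq z : ℂ)) = ((1 - normSq z : ℝ) : ℂ) by push_cast; ring,
      Complex.norm_real, Real.norm_eq_abs, _root_.abs_of_nonneg hnzpos]
  have e2 : ‖(1 - (normSq c : ℂ))‖ = 1 - normSq c := by
    rw [show (1 - (normSq c : ℂ)) = ((1 - normSq c : ℝ) : ℂ) by push_cast; ring,
      Complex.norm_real, Real.norm_eq_abs, _root_.abs_of_nonneg hncpos.le]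
  rw [e1, e2, div_le_one hncpos] at hb1
  rw [nsq_eq, nsq_eq] at hb1
  linarith

theorem schwarz_pick (θ : ℂ → ℂ) (hθ : DifferentiableOn ℂ θ (Metric.ball 0 1))
    (hb : ∀ z ∈ Metric.ball (0:ℂ) 1, ‖θ z‖ ≤ 1) (z : ℂ) (hz : z ∈ Metric.ball (0:ℂ) 1) :
    ‖deriv θ z‖ * (1 - ‖z‖ ^ 2) ≤ 1 - ‖θ z‖ ^ 2 := by
  set dn := ‖deriv θ z‖
  set tn := ‖θ z‖
  have key : ∀ r ∈ Set.Ioo (0:ℝ) 1, 0 ≤ 1 - r^2 * tn^2 - r * (dn * (1 - ‖z‖^2)) := by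
    intro r hr
    set g : ℂ → ℂ := fun w => (r:ℂ) * θ w with hg_def
    have hgd : DifferentiableOn ℂ g (ball 0 1) := hθ.const_smul (r:ℂ)
    have hgm : MapsTo g (ball 0 1) (ball 0 1) := by
      intro w hw
      rw [mem_ball_zero_iff]
      calc ‖(r:ℂ) * θ w‖ = r * ‖θ w‖ := by
            rw [norm_mul, Complex.norm_real, Real.norm_eq_abs, _root_.abs_of_pos hr.1]
        _ ≤ r * 1 := by nlinarith [hb w hw, hr.1.le]
        _ < 1 := by linarith [hr.2]
    have hsp := schwarz_pick_strict g hgd hgm z hz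
    have hdg : deriv g z = (r:ℂ) * deriv θ z := by
      have : HasDerivAt g ((r:ℂ) * deriv θ z) z :=
        ((hθ.differentiableAt (isOpen_ball.mem_nhds hz)).hasDerivAt).const_mul (r:ℂ)
      exact this.deriv
    rw [hdg, norm_mul, Complex.norm_real, Real.norm_eq_abs, _root_.abs_of_pos hr.1] at hsp
    have : ‖g z‖ = r * tn := by
      rw [hg_def]; rw [norm_mul, Complex.norm_real, Real.norm_eq_abs, _root_.abs_of_pos hr.1]
    rw [this] at hsp
    nlinarith
  have hcont : Continuous (fun r : ℝ => 1 - r^2 * tn^2 - r * (dn * (1 - ‖z‖^2))) := by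
    continuity
  have hnb : (𝓝[Set.Ioo (0:ℝ) 1] 1).NeBot := by
    rw [← mem_closure_iff_nhdsWithin_neBot, closure_Ioo (by norm_num : (0:ℝ) ≠ 1)]
    exact ⟨by norm_num, le_refl 1⟩
  have hlim : Tendsto (fun r : ℝ => 1 - r^2 * tn^2 - r * (dn * (1 - ‖z‖^2)))
      (𝓝[Set.Ioo (0:ℝ) 1] 1) (𝓝 (1 - 1^2 * tn^2 - 1 * (dn * (1 - ‖z‖^2)))) :=
    (hcont.tendsto 1).mono_left nhdsWithin_le_nhds
  have hfin : 0 ≤ 1 - 1^2 * tn^2 - 1 * (dn * (1 - ‖z‖^2)) :=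
    ge_of_tendsto hlim (eventually_nhdsWithin_of_forall key)
  nlinarith

lemma nsq_eq' (a : ℂ) : Complex.normSq a = ‖a‖ ^ 2 := by
  rw [Complex.normSq_eq_norm_sq]

lemma norm2_eq (a : ℂ) : ‖a‖ ^ 2 = a.re ^ 2 + a.im ^ 2 := by
  rw [← nsq_eq', Complex.normSq_apply]; ring

lemma HasDerivAt.cre {F : ℝ → ℂ} {F' : ℂ} {x : ℝ} (h : HasDerivAt F F' x) :
    HasDerivAt (fun t => (F t).re) F'.re x := by
  exact Complex.reCLM.hasFDerivAt.comp_hasDerivAt x h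

lemma HasDerivAt.cim {F : ℝ → ℂ} {F' : ℂ} {x : ℝ} (h : HasDerivAt F F' x) :
    HasDerivAt (fun t => (F t).im) F'.im x := by
  exact Complex.imCLM.hasFDerivAt.comp_hasDerivAt x h

lemma line_comp {g : ℂ → ℂ} {d : ℂ} (v p : ℂ) {x : ℝ}
    (hg : HasDerivAt g d ((x:ℂ)*v + p)) :
    HasDerivAt (fun t : ℝ => g ((t:ℂ)*v + p)) (d * v) x := by
  have h1 : HasDerivAt (fun y : ℂ => y*v + p) v ((x:ℝ):ℂ) := by
    simpa using ((hasDerivAt_id ((x:ℝ):ℂ)).mul_const v).add_const p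
  exact (HasDerivAt.comp ((x:ℝ):ℂ) hg h1).comp_ofReal

lemma hasDerivAt_lineW (v p : ℂ) (x : ℝ) :
    HasDerivAt (fun t : ℝ => (t:ℂ)*v + p) v x := by
  simpa using ((((hasDerivAt_id ((x:ℝ):ℂ)).mul_const v).add_const p)).comp_ofReal


noncomputable def lapE (θ : ℂ → ℂ) (v w : ℂ) : ℝ :=
  (-(2*((deriv θ w*v).re^2 + (deriv θ w*v).im^2)
      + 2*((θ w).re*(deriv (deriv θ) w*v*v).re + (θ w).im*(deriv (deriv θ) w*v*v).im))
      * (1 - (w.re^2+w.im^2))^2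
   - 2*(2*((θ w).re*(deriv θ w*v).re + (θ w).im*(deriv θ w*v).im))
      *(2*(w.re*v.re + w.im*v.im))*(1 - (w.re^2+w.im^2))
   + (1 - ((θ w).re^2+(θ w).im^2))*(2*(v.re^2+v.im^2))*(1 - (w.re^2+w.im^2))
   + 2*(1 - ((θ w).re^2+(θ w).im^2))*(2*(w.re*v.re+w.im*v.im))^2)
  / (1 - (w.re^2+w.im^2))^3

noncomputable def lineG (θ : ℂ → ℂ) (v p : ℂ) (x : ℝ) : ℝ :=
  (-(2 * ((θ ((x:ℂ)*v+p)).re * (deriv θ ((x:ℂ)*v+p)*v).re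
        + (θ ((x:ℂ)*v+p)).im * (deriv θ ((x:ℂ)*v+p)*v).im))
      * (1 - (((x:ℂ)*v+p).re^2 + ((x:ℂ)*v+p).im^2))
   + (1 - ((θ ((x:ℂ)*v+p)).re^2 + (θ ((x:ℂ)*v+p)).im^2))
      * (2 * (((x:ℂ)*v+p).re * v.re + ((x:ℂ)*v+p).im * v.im)))
  / ((1 - (((x:ℂ)*v+p).re^2 + ((x:ℂ)*v+p).im^2))^2)

set_option maxHeartbeats 1000000 in
lemma line_deriv2 (θ : ℂ → ℂ) (hθ : DifferentiableOn ℂ θ (Metric.ball 0 1))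
    (p v : ℂ) (x0 : ℝ) (hw0 : (x0:ℂ)*v + p ∈ Metric.ball (0:ℂ) 1) :
    deriv (fun x : ℝ => deriv (fun x' : ℝ =>
      (1 - ‖θ ((x':ℂ)*v + p)‖ ^ 2) / (1 - ‖(x':ℂ)*v + p‖ ^ 2)) x) x0
    = lapE θ v ((x0:ℂ)*v + p) := by
  have hAn : AnalyticOnNhd ℂ θ (ball 0 1) := hθ.analyticOnNhd isOpen_ball
  have hAn1 : AnalyticOnNhd ℂ (deriv θ) (ball 0 1) := hAn.deriv
  have hSopen : IsOpen ((fun x : ℝ => (x:ℂ)*v + p) ⁻¹' (ball 0 1)) :=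
    (isOpen_ball).preimage (by continuity)
  have hx0S : x0 ∈ ((fun x : ℝ => (x:ℂ)*v + p) ⁻¹' (ball 0 1)) := hw0
  have hDDpos : ∀ x : ℝ, ((x:ℂ)*v + p) ∈ ball (0:ℂ) 1 →
      0 < 1 - (((x:ℂ)*v+p).re^2 + ((x:ℂ)*v+p).im^2) := by
    intro x hx
    have h1 : ‖(x:ℂ)*v + p‖ < 1 := mem_ball_zero_iff.mp hx
    have h2 : ‖(x:ℂ)*v + p‖^2 < 1 := by nlinarith [norm_nonneg ((x:ℂ)*v + p)]
    rw [norm2_eq] at h2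
    linarith
  -- rewrite the inner function in re/im form
  have hInner : (fun x' : ℝ => (1 - ‖θ ((x':ℂ)*v + p)‖ ^ 2) / (1 - ‖(x':ℂ)*v + p‖ ^ 2))
      = fun x' : ℝ => (1 - ((θ ((x':ℂ)*v+p)).re^2 + (θ ((x':ℂ)*v+p)).im^2))
          / (1 - (((x':ℂ)*v+p).re^2 + ((x':ℂ)*v+p).im^2)) := by
    funext x'
    rw [norm2_eq, norm2_eq]
  -- Step A: the inner derivative equals lineG on the good set
  have hStepA : ∀ x : ℝ, ((x:ℂ)*v + p) ∈ ball (0:ℂ) 1 →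
      deriv (fun x' : ℝ => (1 - ((θ ((x':ℂ)*v+p)).re^2 + (θ ((x':ℂ)*v+p)).im^2))
          / (1 - (((x':ℂ)*v+p).re^2 + ((x':ℂ)*v+p).im^2))) x = lineG θ v p x := by
    intro x hx
    have hWx : HasDerivAt (fun t : ℝ => (t:ℂ)*v + p) v x := hasDerivAt_lineW v p x
    have hTx : HasDerivAt (fun t : ℝ => θ ((t:ℂ)*v + p)) (deriv θ ((x:ℂ)*v+p) * v) x :=
      line_comp v p ((hAn _ hx).differentiableAt.hasDerivAt)
    have hFx := ((hTx.cre.fun_pow 2).fun_add (hTx.cim.fun_pow 2)).const_sub 1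
    have hDx := ((hWx.cre.fun_pow 2).fun_add (hWx.cim.fun_pow 2)).const_sub 1
    have hq := hFx.fun_div hDx (ne_of_gt (hDDpos x hx))
    rw [hq.deriv, lineG]
    push_cast
    ring
  have hEv : deriv (fun x' : ℝ => (1 - ((θ ((x':ℂ)*v+p)).re^2 + (θ ((x':ℂ)*v+p)).im^2))
          / (1 - (((x':ℂ)*v+p).re^2 + ((x':ℂ)*v+p).im^2))) =ᶠ[𝓝 x0] lineG θ v p := by
    filter_upwards [hSopen.mem_nhds hx0S] with x hx
    exact hStepA x hx
  -- Step C: derivative of lineG at x0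
  have hW0 : HasDerivAt (fun t : ℝ => (t:ℂ)*v + p) v x0 := hasDerivAt_lineW v p x0
  have hT0 : HasDerivAt (fun t : ℝ => θ ((t:ℂ)*v + p)) (deriv θ ((x0:ℂ)*v+p) * v) x0 :=
    line_comp v p ((hAn _ hw0).differentiableAt.hasDerivAt)
  have hDV0 : HasDerivAt (fun t : ℝ => deriv θ ((t:ℂ)*v + p) * v)
      ((deriv (deriv θ) ((x0:ℂ)*v+p) * v) * v) x0 :=
    (line_comp v p ((hAn1 _ hw0).differentiableAt.hasDerivAt)).mul_const v
  have hA0 := (hT0.cre.fun_mul hDV0.cre).fun_add (hT0.cim.fun_mul hDV0.cim)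
  have hA2 := (hA0.const_mul (2:ℝ)).fun_neg
  have hD0 := ((hW0.cre.fun_pow 2).fun_add (hW0.cim.fun_pow 2)).const_sub 1
  have hF0 := ((hT0.cre.fun_pow 2).fun_add (hT0.cim.fun_pow 2)).const_sub 1
  have hM0 := ((hW0.cre.mul_const v.re).fun_add (hW0.cim.mul_const v.im)).const_mul (2:ℝ)
  have hNum := (hA2.fun_mul hD0).fun_add (hF0.fun_mul hM0)
  have hDen := hD0.fun_pow 2
  have hGd := hNum.fun_div hDen (pow_ne_zero 2 (ne_of_gt (hDDpos x0 hw0)))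
  rw [hInner, hEv.deriv_eq]
  rw [show lineG θ v p = (fun x : ℝ =>
    (-(2 * ((θ ((x:ℂ)*v+p)).re * (deriv θ ((x:ℂ)*v+p)*v).re
        + (θ ((x:ℂ)*v+p)).im * (deriv θ ((x:ℂ)*v+p)*v).im))
      * (1 - (((x:ℂ)*v+p).re^2 + ((x:ℂ)*v+p).im^2))
   + (1 - ((θ ((x:ℂ)*v+p)).re^2 + (θ ((x:ℂ)*v+p)).im^2))
      * (2 * (((x:ℂ)*v+p).re * v.re + ((x:ℂ)*v+p).im * v.im)))
  / ((1 - (((x:ℂ)*v+p).re^2 + ((x:ℂ)*v+p).im^2))^2)) from rfl]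
  rw [hGd.deriv, lapE]
  have hDpos := hDDpos x0 hw0
  set a := (θ ((x0:ℂ)*v+p)).re with ha
  set b := (θ ((x0:ℂ)*v+p)).im with hbb
  set c := (deriv θ ((x0:ℂ)*v+p)*v).re with hcc
  set d := (deriv θ ((x0:ℂ)*v+p)*v).im with hdd
  set e1 := (deriv (deriv θ) ((x0:ℂ)*v+p)*v*v).re with he1
  set e2 := (deriv (deriv θ) ((x0:ℂ)*v+p)*v*v).im with he2
  set wr := ((x0:ℂ)*v+p).re with hwr
  set wi := ((x0:ℂ)*v+p).im with hwi
  have hDne : (1 - (wr^2 + wi^2)) ≠ 0 := ne_of_gt hDpos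
  field_simp
  push_cast
  ring

set_option maxHeartbeats 1000000 in
lemma lapE_sum_le (θ : ℂ → ℂ) (hθ : DifferentiableOn ℂ θ (Metric.ball 0 1))
    (hb : ∀ z ∈ Metric.ball (0:ℂ) 1, ‖θ z‖ ≤ 1) (z : ℂ) (hz : z ∈ Metric.ball (0:ℂ) 1) :
    lapE θ 1 z + lapE θ I z ≤ 4 * (1 + ‖z‖) ^ 2 * (1 - ‖θ z‖ ^ 2) / (1 - ‖z‖ ^ 2) ^ 3 := by
  have hz1 : ‖z‖ < 1 := mem_ball_zero_iff.mp hz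
  have hs0 : (0:ℝ) ≤ ‖z‖ := norm_nonneg z
  have hq0 : (0:ℝ) ≤ ‖deriv θ z‖ := norm_nonneg _
  have hs2 : ‖z‖^2 = z.re^2 + z.im^2 := norm2_eq z
  have hq2 : ‖deriv θ z‖^2 = (deriv θ z).re^2 + (deriv θ z).im^2 := norm2_eq _
  have hab : (θ z).re^2 + (θ z).im^2 ≤ 1 := by
    rw [← norm2_eq]; nlinarith [hb z hz, norm_nonneg (θ z)]
  have hD : 0 < 1 - (z.re^2 + z.im^2) := by rw [← hs2]; nlinarith
  have hsp := schwarz_pick θ hθ hb z hz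
  rw [hs2, norm2_eq (θ z)] at hsp
  rw [lapE, lapE]
  simp only [Complex.one_re, Complex.one_im, Complex.I_re, Complex.I_im, mul_one, mul_zero,
    zero_mul, add_zero, zero_add, Complex.mul_I_re, Complex.mul_I_im, neg_neg, one_pow,
    mul_neg, neg_mul]
  norm_num
  rw [show (1:ℝ) - ‖z‖^2 = 1 - (z.re^2+z.im^2) by rw [hs2],
      show ‖θ z‖^2 = (θ z).re^2 + (θ z).im^2 from norm2_eq _]
  rw [← add_div, div_le_div_iff_of_pos_right (by positivity)]
  set q := ‖deriv θ z‖ with hqdef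
  set s := ‖z‖ with hsdef
  set R : ℝ := z.re*((θ z).re*(deriv θ z).re+(θ z).im*(deriv θ z).im)
      + z.im*((θ z).im*(deriv θ z).re - (θ z).re*(deriv θ z).im) with hRdef
  have hid : ((θ z).re^2+(θ z).im^2) * (((deriv θ z).re^2+(deriv θ z).im^2) * (z.re^2+z.im^2))
      = R^2
        + (((θ z).re*(deriv θ z).re+(θ z).im*(deriv θ z).im)*z.im
          + ((θ z).re*(deriv θ z).im-(θ z).im*(deriv θ z).re)*z.re)^2 := by
    rw [hRdef]; ring
  have hcd0 : (0:ℝ) ≤ ((deriv θ z).re^2+(deriv θ z).im^2) * (z.re^2+z.im^2) := by positivity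
  have hR2 : R^2 ≤ (q*s)^2 := by
    nlinarith [hid, sq_nonneg (((θ z).re*(deriv θ z).re+(θ z).im*(deriv θ z).im)*z.im
          + ((θ z).re*(deriv θ z).im-(θ z).im*(deriv θ z).re)*z.re),
      mul_nonneg (sub_nonneg.mpr hab) hcd0, hq2, hs2]
  have hR : -R ≤ q*s := by
    nlinarith [hR2, sq_nonneg (q*s + R), mul_nonneg hq0 hs0]
  have h2 : -R * (1-(z.re^2+z.im^2)) ≤ q*s*(1-(z.re^2+z.im^2)) :=
    mul_le_mul_of_nonneg_right hR hD.le
  have h3 : q*(1-(z.re^2+z.im^2))*s ≤ (1-((θ z).re^2+(θ z).im^2))*s :=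
    mul_le_mul_of_nonneg_right hsp hs0
  have h4 : (0:ℝ) ≤ ((deriv θ z).re^2+(deriv θ z).im^2)*(1-(z.re^2+z.im^2))^2 := by positivity
  have hs2f : (1-((θ z).re^2+(θ z).im^2))*(z.re^2+z.im^2)
      = (1-((θ z).re^2+(θ z).im^2))*s^2 := by rw [hs2]
  have hf0 : (0:ℝ) ≤ 1-((θ z).re^2+(θ z).im^2) := sub_nonneg.mpr hab
  nlinarith [h2, h3, h4, hs2f, hf0, hD.le, hs0, hq0]

/-- The planar Laplacian `Δu = ∂²u/∂x² + ∂²u/∂y²` of `u : ℂ → ℝ` at `z = x + iy`. -/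
noncomputable def planarLaplacian (u : ℂ → ℝ) (z : ℂ) : ℝ :=
  deriv (fun x : ℝ => deriv (fun x' : ℝ => u ((x' : ℂ) + z.im * Complex.I)) x) z.re +
  deriv (fun y : ℝ => deriv (fun y' : ℝ => u ((z.re : ℂ) + y' * Complex.I)) y) z.im

/-- Upper bound for the Laplacian of the diagonal reproducing kernel
`k(z,z) = (1-|θ(z)|²)/(1-|z|²)`:
`Δ k(z,z) ≤ 4 (1+|z|)² (1-|θ(z)|²)/(1-|z|²)³`. -/
theorem laplacian_diag_kernel_upper
    (θ : ℂ → ℂ) (hθ : DifferentiableOn ℂ θ (Metric.ball 0 1))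
    (hb : ∀ z ∈ Metric.ball (0:ℂ) 1, ‖θ z‖ ≤ 1) :
    ∀ z ∈ Metric.ball (0:ℂ) 1,
      planarLaplacian (fun w => (1 - ‖θ w‖ ^ 2) / (1 - ‖w‖ ^ 2)) z ≤
        4 * (1 + ‖z‖) ^ 2 * (1 - ‖θ z‖ ^ 2) / (1 - ‖z‖ ^ 2) ^ 3 := by
  intro z hz
  rw [planarLaplacian]
  have ex : (fun x' : ℝ => (1 - ‖θ ((x':ℂ) + (z.im:ℂ)*Complex.I)‖^2)
        / (1 - ‖(x':ℂ) + (z.im:ℂ)*Complex.I‖^2))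
      = (fun x' : ℝ => (1 - ‖θ ((x':ℂ)*1 + (z.im:ℂ)*Complex.I)‖^2)
        / (1 - ‖(x':ℂ)*1 + (z.im:ℂ)*Complex.I‖^2)) := by
    funext x'; rw [mul_one]
  have ey : (fun y' : ℝ => (1 - ‖θ ((z.re:ℂ) + (y':ℂ)*Complex.I)‖^2)
        / (1 - ‖(z.re:ℂ) + (y':ℂ)*Complex.I‖^2))
      = (fun y' : ℝ => (1 - ‖θ ((y':ℂ)*Complex.I + (z.re:ℂ))‖^2)
        / (1 - ‖(y':ℂ)*Complex.I + (z.re:ℂ)‖^2)) := by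
    funext y'; rw [add_comm ((z.re:ℂ)) ((y':ℂ)*Complex.I)]
  rw [ex, ey]
  have hmx : ((z.re:ℝ):ℂ)*1 + (z.im:ℂ)*Complex.I ∈ Metric.ball (0:ℂ) 1 := by
    rw [mul_one, Complex.re_add_im]; exact hz
  have hmy : ((z.im:ℝ):ℂ)*Complex.I + (z.re:ℂ) ∈ Metric.ball (0:ℂ) 1 := by
    rw [add_comm, Complex.re_add_im]; exact hz
  rw [line_deriv2 θ hθ ((z.im:ℂ)*Complex.I) 1 z.re hmx,
      line_deriv2 θ hθ ((z.re:ℂ)) Complex.I z.im hmy]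
  rw [show ((z.re:ℝ):ℂ)*1 + (z.im:ℂ)*Complex.I = z by rw [mul_one, Complex.re_add_im],
      show ((z.im:ℝ):ℂ)*Complex.I + (z.re:ℂ) = z by rw [add_comm, Complex.re_add_im]]
  exact lapE_sum_le θ hθ hb z hz
end

section
/- Let k(z,z) = (1 - |θ(z)|²)/(1 - |z|²) where θ is a holomorphic self-map of the unit disk. Then for all z in the open unit disk, Δ k(z,z) ≥ 4 (|z| - |θ(z)|)² (1 - |θ(z)|²)/(1 - |z|²)³. -/
open Complex Metric Set Filter

namespace LapAux

lemma horiz {f : ℂ → ℂ} {f' z : ℂ} (h : HasDerivAt f f' z) :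
    HasDerivAt (fun x : ℝ => f (x + z.im * I)) f' z.re := by
  have h1 : HasDerivAt (fun w : ℂ => f (w + z.im * I)) f' (z.re : ℂ) := by
    have hl := (hasDerivAt_id ((z.re : ℂ))).add_const ((z.im : ℝ) * I : ℂ)
    have h2 := HasDerivAt.comp (z.re : ℂ) (by simpa [Complex.re_add_im] using h) hl
    simpa [Function.comp_def] using h2
  exact h1.comp_ofReal

lemma vert {f : ℂ → ℂ} {f' z : ℂ} (h : HasDerivAt f f' z) :
    HasDerivAt (fun y : ℝ => f (z.re + y * I)) (f' * I) z.im := by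
  have h1 : HasDerivAt (fun w : ℂ => f (z.re + w * I)) (f' * I) (z.im : ℂ) := by
    have hl : HasDerivAt (fun w : ℂ => (z.re : ℂ) + w * I) I (z.im : ℂ) := by
      simpa using ((hasDerivAt_id ((z.im : ℂ))).mul_const I).const_add (z.re : ℂ)
    have h2 := HasDerivAt.comp (z.im : ℂ) (by simpa [Complex.re_add_im] using h) hl
    simpa [mul_comm, Function.comp_def] using h2
  exact h1.comp_ofReal

lemma creal {c : ℝ → ℂ} {c' : ℂ} {x : ℝ} (h : HasDerivAt c c' x) :
    HasDerivAt (fun x => (c x).re) c'.re x :=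
  (Complex.reCLM.hasFDerivAt (x := c x)).comp_hasDerivAt x h

lemma cconj {c : ℝ → ℂ} {c' : ℂ} {x : ℝ} (h : HasDerivAt c c' x) :
    HasDerivAt (fun x => (starRingEnd ℂ) (c x)) ((starRingEnd ℂ) c') x := by
  have := (Complex.conjCLE.toContinuousLinearMap.hasFDerivAt (x := c x)).comp_hasDerivAt x h
  simpa [Function.comp_def] using this

lemma hB_pos {w : ℂ} (hw : w ∈ ball (0:ℂ) 1) : 0 < 1 - w.re^2 - w.im^2 := by
  have h1 : ‖w‖ < 1 := by simpa using mem_ball_zero_iff.mp hw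
  have h2 : ‖w‖^2 = w.re^2 + w.im^2 := by
    rw [Complex.sq_norm, Complex.normSq_apply]; ring
  nlinarith [norm_nonneg w]

/-- The kernel function written with explicit real/imaginary parts. -/
noncomputable def U (θ : ℂ → ℂ) (w : ℂ) : ℝ :=
  (1 - ((starRingEnd ℂ) (θ w) * θ w).re) / (1 - w.re^2 - w.im^2)

lemma U_eq (θ : ℂ → ℂ) :
    (fun w => (1 - ‖θ w‖ ^ 2) / (1 - ‖w‖ ^ 2)) = U θ := by
  funext w
  have h1 : ‖θ w‖^2 = ((starRingEnd ℂ) (θ w) * θ w).re := by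
    rw [Complex.sq_norm, Complex.normSq_apply]
    simp [Complex.mul_re, Complex.conj_re, Complex.conj_im]
  have h2 : ‖w‖^2 = w.re^2 + w.im^2 := by
    rw [Complex.sq_norm, Complex.normSq_apply]; ring
  rw [U, h1, h2]; ring_nf



/-- ∂U/∂x -/
noncomputable def P (θ : ℂ → ℂ) (w : ℂ) : ℝ :=
  ((-2 * ((starRingEnd ℂ) (θ w) * deriv θ w).re) * (1 - w.re^2 - w.im^2)
    + (1 - ((starRingEnd ℂ) (θ w) * θ w).re) * (2*w.re)) / ((1 - w.re^2 - w.im^2)^2)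

/-- ∂U/∂y -/
noncomputable def Pv (θ : ℂ → ℂ) (w : ℂ) : ℝ :=
  ((-2 * ((starRingEnd ℂ) (θ w) * (deriv θ w * I)).re) * (1 - w.re^2 - w.im^2)
    + (1 - ((starRingEnd ℂ) (θ w) * θ w).re) * (2*w.im)) / ((1 - w.re^2 - w.im^2)^2)

lemma hasDerivAt_U_horiz {θ : ℂ → ℂ} (hθ : DifferentiableOn ℂ θ (ball 0 1))
    {w : ℂ} (hw : w ∈ ball (0:ℂ) 1) :
    HasDerivAt (fun x : ℝ => U θ ((x : ℂ) + w.im * I)) (P θ w) w.re := by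
  have hwre : (w.re : ℂ) + (w.im : ℝ) * I = w := Complex.re_add_im w
  have hθw : HasDerivAt θ (deriv θ w) w :=
    (hθ.differentiableAt (isOpen_ball.mem_nhds hw)).hasDerivAt
  have hc : HasDerivAt (fun x : ℝ => θ ((x:ℂ) + w.im * I)) (deriv θ w) w.re := horiz hθw
  have hcd := cconj hc
  have hm := hcd.mul hc
  have hA := (creal hm).const_sub 1
  have hB : HasDerivAt (fun x : ℝ => 1 - x^2 - w.im^2) (-(2*w.re)) w.re := by
    have h1 : HasDerivAt (fun x : ℝ => x^2) (2*w.re) w.re := by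
      simpa [mul_comm] using hasDerivAt_pow 2 w.re
    simpa using (h1.const_sub 1).sub_const (w.im^2)
  have hBne : (1 - w.re^2 - w.im^2) ≠ 0 := ne_of_gt (hB_pos hw)
  have hdiv := hA.div hB (by simpa using hBne)
  have heq : (fun x : ℝ => U θ ((x:ℂ) + w.im * I))
      = fun x : ℝ => (1 - ((starRingEnd ℂ) (θ ((x:ℂ) + w.im * I)) * θ ((x:ℂ) + w.im * I)).re)
          / (1 - x^2 - w.im^2) := by
    funext x
    simp [U, Complex.add_re, Complex.add_im, Complex.ofReal_re, Complex.ofReal_im,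
      Complex.mul_I_re, Complex.mul_I_im]
  rw [heq]
  refine hdiv.congr_deriv ?_
  symm
  simp only [Pi.pow_apply, Pi.mul_apply, Pi.add_apply, Pi.sub_apply, Pi.div_apply]
  rw [P]
  rw [hwre]
  simp only [Complex.mul_re, Complex.mul_im, Complex.add_re, Complex.add_im, Complex.conj_re, Complex.conj_im]
  ring

lemma hasDerivAt_U_vert {θ : ℂ → ℂ} (hθ : DifferentiableOn ℂ θ (ball 0 1))
    {w : ℂ} (hw : w ∈ ball (0:ℂ) 1) :
    HasDerivAt (fun y : ℝ => U θ ((w.re : ℂ) + (y : ℂ) * I)) (Pv θ w) w.im := by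
  have hwre : (w.re : ℂ) + (w.im : ℝ) * I = w := Complex.re_add_im w
  have hθw : HasDerivAt θ (deriv θ w) w :=
    (hθ.differentiableAt (isOpen_ball.mem_nhds hw)).hasDerivAt
  have hc : HasDerivAt (fun y : ℝ => θ ((w.re:ℂ) + (y:ℂ) * I)) (deriv θ w * I) w.im := vert hθw
  have hcd := cconj hc
  have hm := hcd.mul hc
  have hA := (creal hm).const_sub 1
  have hB : HasDerivAt (fun y : ℝ => 1 - w.re^2 - y^2) (-(2*w.im)) w.im := by
    have h1 : HasDerivAt (fun y : ℝ => y^2) (2*w.im) w.im := by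
      simpa [mul_comm] using hasDerivAt_pow 2 w.im
    have h2 := (h1.const_sub (1 - w.re^2))
    have heq2 : (fun y : ℝ => 1 - w.re^2 - y^2) = (fun y : ℝ => (1 - w.re^2) - y^2) := by
      funext y; ring
    rw [heq2]; simpa using h2
  have hBne : (1 - w.re^2 - w.im^2) ≠ 0 := ne_of_gt (hB_pos hw)
  have hdiv := hA.div hB (by simpa using hBne)
  have heq : (fun y : ℝ => U θ ((w.re:ℂ) + (y:ℂ) * I))
      = fun y : ℝ => (1 - ((starRingEnd ℂ) (θ ((w.re:ℂ) + (y:ℂ) * I)) * θ ((w.re:ℂ) + (y:ℂ) * I)).re)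
          / (1 - w.re^2 - y^2) := by
    funext y
    simp [U, Complex.add_re, Complex.add_im, Complex.ofReal_re, Complex.ofReal_im,
      Complex.mul_I_re, Complex.mul_I_im]
  rw [heq]
  refine hdiv.congr_deriv ?_
  symm
  simp only [Pi.pow_apply, Pi.mul_apply, Pi.add_apply, Pi.sub_apply, Pi.div_apply]
  rw [Pv, hwre]
  simp only [Complex.mul_re, Complex.mul_im, Complex.add_re, Complex.add_im, Complex.conj_re,
    Complex.conj_im, Complex.I_re, Complex.I_im]
  ring

lemma hasDerivAt_P_horiz {θ : ℂ → ℂ} (hθ : DifferentiableOn ℂ θ (ball 0 1))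
    {z : ℂ} (hz : z ∈ ball (0:ℂ) 1) :
    HasDerivAt (fun x : ℝ => P θ ((x : ℂ) + z.im * I))
      (((-2*(((starRingEnd ℂ) (deriv θ z) * deriv θ z).re
            + ((starRingEnd ℂ) (θ z) * deriv (deriv θ) z).re)) * (1 - z.re^2 - z.im^2)^2
        + 2*(1 - ((starRingEnd ℂ) (θ z) * θ z).re)*(1 - z.re^2 - z.im^2)
        - 8*z.re*((starRingEnd ℂ) (θ z) * deriv θ z).re*(1 - z.re^2 - z.im^2)
        + 8*z.re^2*(1 - ((starRingEnd ℂ) (θ z) * θ z).re)) / (1 - z.re^2 - z.im^2)^3) z.re := by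
  have hθ' : DifferentiableOn ℂ (deriv θ) (ball 0 1) :=
    ((hθ.analyticOnNhd isOpen_ball).deriv).differentiableOn
  have hwre : (z.re : ℂ) + (z.im : ℝ) * I = z := Complex.re_add_im z
  have hθz : HasDerivAt θ (deriv θ z) z :=
    (hθ.differentiableAt (isOpen_ball.mem_nhds hz)).hasDerivAt
  have hθz2 : HasDerivAt (deriv θ) (deriv (deriv θ) z) z :=
    (hθ'.differentiableAt (isOpen_ball.mem_nhds hz)).hasDerivAt
  have hc : HasDerivAt (fun x : ℝ => θ ((x:ℂ) + z.im * I)) (deriv θ z) z.re := horiz hθz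
  have hc2 : HasDerivAt (fun x : ℝ => deriv θ ((x:ℂ) + z.im * I)) (deriv (deriv θ) z) z.re :=
    horiz hθz2
  have hm1 := (cconj hc).mul hc2
  have hn1 := HasDerivAt.const_mul (-2 : ℝ) (creal hm1)
  have hB : HasDerivAt (fun x : ℝ => 1 - x^2 - z.im^2) (-(2*z.re)) z.re := by
    have h1 : HasDerivAt (fun x : ℝ => x^2) (2*z.re) z.re := by
      simpa [mul_comm] using hasDerivAt_pow 2 z.re
    simpa using (h1.const_sub 1).sub_const (z.im^2)
  have hterm1 := hn1.mul hB
  have hm2 := (cconj hc).mul hc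
  have hA := (creal hm2).const_sub 1
  have hx2 : HasDerivAt (fun x : ℝ => 2*x) 2 z.re := by
    simpa using (hasDerivAt_id z.re).const_mul (2:ℝ)
  have hterm2 := hA.mul hx2
  have hnum := hterm1.add hterm2
  have hBne : (1 - z.re^2 - z.im^2) ≠ 0 := ne_of_gt (hB_pos hz)
  have hden := hB.pow 2
  have hdiv := hnum.div hden (pow_ne_zero 2 hBne)
  have heq : (fun x : ℝ => P θ ((x:ℂ) + z.im * I))
      = fun x : ℝ =>
        ((-2 * ((starRingEnd ℂ) (θ ((x:ℂ) + z.im * I)) * deriv θ ((x:ℂ) + z.im * I)).re)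
            * (1 - x^2 - z.im^2)
          + (1 - ((starRingEnd ℂ) (θ ((x:ℂ) + z.im * I)) * θ ((x:ℂ) + z.im * I)).re) * (2*x))
          / ((1 - x^2 - z.im^2)^2) := by
    funext x
    simp [P, Complex.add_re, Complex.add_im, Complex.ofReal_re, Complex.ofReal_im,
      Complex.mul_I_re, Complex.mul_I_im]
  rw [heq]
  refine hdiv.congr_deriv ?_
  symm
  simp only [Pi.pow_apply, Pi.mul_apply, Pi.add_apply, Pi.sub_apply, Pi.div_apply]
  rw [hwre]
  simp only [Complex.mul_re, Complex.mul_im, Complex.add_re, Complex.add_im, Complex.conj_re,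
    Complex.conj_im]
  have hBne' : (1 - z.re^2 - z.im^2) ≠ 0 := hBne
  field_simp
  ring

lemma hasDerivAt_P_vert {θ : ℂ → ℂ} (hθ : DifferentiableOn ℂ θ (ball 0 1))
    {z : ℂ} (hz : z ∈ ball (0:ℂ) 1) :
    HasDerivAt (fun y : ℝ => Pv θ ((z.re : ℂ) + (y:ℂ) * I))
      (((-2*(((starRingEnd ℂ) (deriv θ z) * deriv θ z).re
            - ((starRingEnd ℂ) (θ z) * deriv (deriv θ) z).re)) * (1 - z.re^2 - z.im^2)^2
        + 2*(1 - ((starRingEnd ℂ) (θ z) * θ z).re)*(1 - z.re^2 - z.im^2)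
        - 8*z.im*((starRingEnd ℂ) (θ z) * (deriv θ z * I)).re*(1 - z.re^2 - z.im^2)
        + 8*z.im^2*(1 - ((starRingEnd ℂ) (θ z) * θ z).re)) / (1 - z.re^2 - z.im^2)^3) z.im := by
  have hθ' : DifferentiableOn ℂ (deriv θ) (ball 0 1) :=
    ((hθ.analyticOnNhd isOpen_ball).deriv).differentiableOn
  have hwre : (z.re : ℂ) + (z.im : ℝ) * I = z := Complex.re_add_im z
  have hθz : HasDerivAt θ (deriv θ z) z :=
    (hθ.differentiableAt (isOpen_ball.mem_nhds hz)).hasDerivAt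
  have hθz2 : HasDerivAt (deriv θ) (deriv (deriv θ) z) z :=
    (hθ'.differentiableAt (isOpen_ball.mem_nhds hz)).hasDerivAt
  have hc : HasDerivAt (fun y : ℝ => θ ((z.re:ℂ) + (y:ℂ) * I)) (deriv θ z * I) z.im := vert hθz
  have hc2 : HasDerivAt (fun y : ℝ => deriv θ ((z.re:ℂ) + (y:ℂ) * I))
      (deriv (deriv θ) z * I) z.im := vert hθz2
  have hm1 := (cconj hc).mul (hc2.mul_const I)
  have hn1 := HasDerivAt.const_mul (-2 : ℝ) (creal hm1)
  have hB : HasDerivAt (fun y : ℝ => 1 - z.re^2 - y^2) (-(2*z.im)) z.im := by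
    have h1 : HasDerivAt (fun y : ℝ => y^2) (2*z.im) z.im := by
      simpa [mul_comm] using hasDerivAt_pow 2 z.im
    have h2 := h1.const_sub (1 - z.re^2)
    have heq2 : (fun y : ℝ => 1 - z.re^2 - y^2) = (fun y : ℝ => (1 - z.re^2) - y^2) := by
      funext y; ring
    rw [heq2]; simpa using h2
  have hterm1 := hn1.mul hB
  have hm2 := (cconj hc).mul hc
  have hA := (creal hm2).const_sub 1
  have hy2 : HasDerivAt (fun y : ℝ => 2*y) 2 z.im := by
    simpa using (hasDerivAt_id z.im).const_mul (2:ℝ)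
  have hterm2 := hA.mul hy2
  have hnum := hterm1.add hterm2
  have hBne : (1 - z.re^2 - z.im^2) ≠ 0 := ne_of_gt (hB_pos hz)
  have hden := hB.pow 2
  have hdiv := hnum.div hden (pow_ne_zero 2 hBne)
  have heq : (fun y : ℝ => Pv θ ((z.re:ℂ) + (y:ℂ) * I))
      = fun y : ℝ =>
        ((-2 * ((starRingEnd ℂ) (θ ((z.re:ℂ) + (y:ℂ) * I)) * (deriv θ ((z.re:ℂ) + (y:ℂ) * I) * I)).re)
            * (1 - z.re^2 - y^2)
          + (1 - ((starRingEnd ℂ) (θ ((z.re:ℂ) + (y:ℂ) * I)) * θ ((z.re:ℂ) + (y:ℂ) * I)).re) * (2*y))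
          / ((1 - z.re^2 - y^2)^2) := by
    funext y
    simp [Pv, Complex.add_re, Complex.add_im, Complex.ofReal_re, Complex.ofReal_im,
      Complex.mul_I_re, Complex.mul_I_im]
  rw [heq]
  refine hdiv.congr_deriv ?_
  symm
  simp only [Pi.pow_apply, Pi.mul_apply, Pi.add_apply, Pi.sub_apply, Pi.div_apply]
  rw [hwre]
  simp only [Complex.mul_re, Complex.mul_im, Complex.add_re, Complex.add_im, Complex.conj_re,
    Complex.conj_im, Complex.I_re, Complex.I_im]
  field_simp
  ring

lemma lap_eq {θ : ℂ → ℂ} (hθ : DifferentiableOn ℂ θ (ball 0 1))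
    {z : ℂ} (hz : z ∈ ball (0:ℂ) 1) :
    planarLaplacian (U θ) z =
      (4*(1+z.re^2+z.im^2)*(1 - ((starRingEnd ℂ) (θ z) * θ z).re)
        - 8*(z * (starRingEnd ℂ) (θ z) * deriv θ z).re * (1 - z.re^2 - z.im^2)
        - 4*((starRingEnd ℂ) (deriv θ z) * deriv θ z).re * (1 - z.re^2 - z.im^2)^2)
        / (1 - z.re^2 - z.im^2)^3 := by
  have hwre : (z.re : ℂ) + (z.im : ℝ) * I = z := Complex.re_add_im z
  have hBne : (1 - z.re^2 - z.im^2) ≠ 0 := ne_of_gt (hB_pos hz)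
  -- horizontal part
  have hopenx : IsOpen {x : ℝ | (x:ℂ) + z.im*I ∈ ball (0:ℂ) 1} :=
    isOpen_ball.preimage (by continuity)
  have hmemx : z.re ∈ {x : ℝ | (x:ℂ) + z.im*I ∈ ball (0:ℂ) 1} := by
    simp only [mem_setOf_eq, hwre]; exact hz
  have hevx : (fun x : ℝ => deriv (fun x' : ℝ => U θ ((x':ℂ) + z.im*I)) x)
      =ᶠ[nhds z.re] fun x => P θ ((x:ℂ) + z.im*I) := by
    filter_upwards [hopenx.mem_nhds hmemx] with x hx
    have h := hasDerivAt_U_horiz hθ hx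
    simp only [Complex.add_re, Complex.add_im, Complex.ofReal_re, Complex.ofReal_im,
      Complex.mul_I_re, Complex.mul_I_im, neg_zero, add_zero, zero_add] at h
    exact h.deriv
  -- vertical part
  have hopeny : IsOpen {y : ℝ | (z.re:ℂ) + (y:ℂ)*I ∈ ball (0:ℂ) 1} :=
    isOpen_ball.preimage (by continuity)
  have hmemy : z.im ∈ {y : ℝ | (z.re:ℂ) + (y:ℂ)*I ∈ ball (0:ℂ) 1} := by
    simp only [mem_setOf_eq, hwre]; exact hz
  have hevy : (fun y : ℝ => deriv (fun y' : ℝ => U θ ((z.re:ℂ) + (y':ℂ)*I)) y)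
      =ᶠ[nhds z.im] fun y => Pv θ ((z.re:ℂ) + (y:ℂ)*I) := by
    filter_upwards [hopeny.mem_nhds hmemy] with y hy
    have h := hasDerivAt_U_vert hθ hy
    simp only [Complex.add_re, Complex.add_im, Complex.ofReal_re, Complex.ofReal_im,
      Complex.mul_I_re, Complex.mul_I_im, neg_zero, add_zero, zero_add] at h
    exact h.deriv
  unfold planarLaplacian
  rw [Filter.EventuallyEq.deriv_eq hevx, Filter.EventuallyEq.deriv_eq hevy,
    (hasDerivAt_P_horiz hθ hz).deriv, (hasDerivAt_P_vert hθ hz).deriv]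
  simp only [Complex.mul_re, Complex.mul_im, Complex.add_re, Complex.add_im, Complex.conj_re,
    Complex.conj_im, Complex.I_re, Complex.I_im]
  field_simp
  ring

end LapAux
open Complex Metric Set Filter

namespace SPAux

lemma mobius_den_ne {a w : ℂ} (ha : ‖a‖ < 1) (hw : ‖w‖ < 1) : 1 - (starRingEnd ℂ) a * w ≠ 0 := by
  intro h
  have h1 : ‖(starRingEnd ℂ) a * w‖ < 1 := by
    rw [norm_mul]
    calc ‖(starRingEnd ℂ) a‖ * ‖w‖ ≤ ‖(starRingEnd ℂ) a‖ * 1 := by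
          apply mul_le_mul_of_nonneg_left hw.le (norm_nonneg _)
      _ = ‖a‖ := by simp
      _ < 1 := ha
  have h2 : (starRingEnd ℂ) a * w = 1 := by linear_combination -h
  rw [h2] at h1; simp at h1

lemma mobius_key (a w : ℂ) :
    Complex.normSq (1 - (starRingEnd ℂ) a * w) - Complex.normSq (a - w)
      = (1 - Complex.normSq a) * (1 - Complex.normSq w) := by
  simp only [Complex.normSq_apply, Complex.sub_re, Complex.sub_im, Complex.mul_re,
    Complex.mul_im, Complex.conj_re, Complex.conj_im, Complex.one_re, Complex.one_im]
  ring

lemma normSq_eq_norm_sq (w : ℂ) : Complex.normSq w = ‖w‖^2 := by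
  rw [Complex.normSq_eq_norm_sq]

lemma mobius_mapsTo {a : ℂ} (ha : ‖a‖ < 1) :
    MapsTo (fun w => (a - w) / (1 - (starRingEnd ℂ) a * w)) (ball (0:ℂ) 1) (ball (0:ℂ) 1) := by
  intro w hw
  rw [mem_ball_zero_iff] at hw ⊢
  have hden := mobius_den_ne ha hw
  rw [norm_div, div_lt_one (norm_pos_iff.mpr hden)]
  have h1 : Complex.normSq a < 1 := by rw [normSq_eq_norm_sq]; nlinarith [norm_nonneg a]
  have h2 : Complex.normSq w < 1 := by rw [normSq_eq_norm_sq]; nlinarith [norm_nonneg w]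
  have key := mobius_key a w
  have h3 : Complex.normSq (a - w) < Complex.normSq (1 - (starRingEnd ℂ) a * w) := by nlinarith
  rw [normSq_eq_norm_sq, normSq_eq_norm_sq] at h3
  nlinarith [norm_nonneg (a - w), norm_nonneg (1 - (starRingEnd ℂ) a * w)]

lemma mobius_hasDerivAt {a w : ℂ} (hden : 1 - (starRingEnd ℂ) a * w ≠ 0) :
    HasDerivAt (fun v => (a - v) / (1 - (starRingEnd ℂ) a * v))
      ((Complex.normSq a - 1) / (1 - (starRingEnd ℂ) a * w)^2) w := by
  have h1 : HasDerivAt (fun v : ℂ => a - v) (-1) w := by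
    simpa using (hasDerivAt_id w).const_sub a
  have h2 : HasDerivAt (fun v : ℂ => 1 - (starRingEnd ℂ) a * v) (-(starRingEnd ℂ) a) w := by
    simpa using ((hasDerivAt_id w).const_mul ((starRingEnd ℂ) a)).const_sub 1
  have hdiv := h1.div h2 hden
  refine hdiv.congr_deriv ?_
  congr 1
  have hconj : (starRingEnd ℂ) a * a = (Complex.normSq a : ℂ) := by
    rw [mul_comm]; exact Complex.mul_conj a
  linear_combination hconj

lemma mobius_diffOn {a : ℂ} (ha : ‖a‖ < 1) :
    DifferentiableOn ℂ (fun w => (a - w) / (1 - (starRingEnd ℂ) a * w)) (ball (0:ℂ) 1) := by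
  intro w hw
  rw [mem_ball_zero_iff] at hw
  exact (mobius_hasDerivAt (mobius_den_ne ha hw)).differentiableAt.differentiableWithinAt

/-- Schwarz–Pick lemma. -/
lemma schwarz_pick {f : ℂ → ℂ} (hd : DifferentiableOn ℂ f (ball 0 1))
    (hm : MapsTo f (ball (0:ℂ) 1) (ball (0:ℂ) 1)) {z : ℂ} (hz : z ∈ ball (0:ℂ) 1) :
    ‖deriv f z‖ * (1 - ‖z‖^2) ≤ 1 - ‖f z‖^2 := by
  rw [mem_ball_zero_iff] at hz
  have hfz : ‖f z‖ < 1 := mem_ball_zero_iff.mp (hm (mem_ball_zero_iff.mpr hz))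
  set a := z with ha_def
  set b := f z with hb_def
  set φa := fun w => (a - w) / (1 - (starRingEnd ℂ) a * w) with hφa
  set φb := fun w => (b - w) / (1 - (starRingEnd ℂ) b * w) with hφb
  set g := fun w => φb (f (φa w)) with hg
  have hφa0 : φa 0 = a := by simp [hφa]
  have hφbb : φb b = 0 := by simp only [hφb, sub_self, zero_div]
  have hg0 : g 0 = 0 := by rw [hg]; simp only [hφa0]; exact hφbb
  have hmapsa := mobius_mapsTo hz
  have hmapsb := mobius_mapsTo hfz
  have hgd : DifferentiableOn ℂ g (ball 0 1) :=
    ((mobius_diffOn hfz).comp (hd.comp (mobius_diffOn hz) hmapsa) (hm.comp hmapsa))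
  have hgm : MapsTo g (ball (0:ℂ) 1) (ball (0:ℂ) 1) := (hmapsb.comp hm).comp hmapsa
  have hschwarz : ‖deriv g 0‖ ≤ 1 := by
    have h5 := Complex.norm_deriv_le_div_of_mapsTo_ball hgd (by rw [hg0]; exact hgm.mono_right ball_subset_closedBall) one_pos
    simpa using h5
  have hfa : HasDerivAt f (deriv f a) a :=
    (hd.differentiableAt (isOpen_ball.mem_nhds (mem_ball_zero_iff.mpr hz))).hasDerivAt
  have hda : HasDerivAt φa ((Complex.normSq a - 1) / (1 - (starRingEnd ℂ) a * 0)^2) 0 :=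
    mobius_hasDerivAt (by simp)
  have hdb : HasDerivAt φb ((Complex.normSq b - 1) / (1 - (starRingEnd ℂ) b * b)^2) b :=
    mobius_hasDerivAt (mobius_den_ne hfz hfz)
  have hcomp : HasDerivAt g
      (((Complex.normSq b - 1) / (1 - (starRingEnd ℂ) b * b)^2) * (deriv f a *
        ((Complex.normSq a - 1) / (1 - (starRingEnd ℂ) a * 0)^2))) 0 := by
    have h1 : HasDerivAt (fun w => f (φa w))
        (deriv f a * ((Complex.normSq a - 1) / (1 - (starRingEnd ℂ) a * 0)^2)) 0 := by
      have := HasDerivAt.comp 0 (by rwa [hφa0]) hda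
      simpa [Function.comp_def] using this
    have hdb' : HasDerivAt φb ((Complex.normSq b - 1) / (1 - (starRingEnd ℂ) b * b)^2)
        ((fun w => f (φa w)) 0) := by
      simp only [hφa0, ← hb_def]; exact hdb
    exact HasDerivAt.comp 0 hdb' h1
  rw [hcomp.deriv] at hschwarz
  -- simplify the norm
  have hb2 : (0:ℝ) < 1 - ‖b‖^2 := by nlinarith [norm_nonneg b]
  have ha2 : (0:ℝ) < 1 - ‖a‖^2 := by nlinarith [norm_nonneg a]
  have hbb : (1:ℂ) - (starRingEnd ℂ) b * b = ((1 - ‖b‖^2 : ℝ) : ℂ) := by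
    have h4 : (starRingEnd ℂ) b * b = (Complex.normSq b : ℂ) := by
      rw [mul_comm]; exact Complex.mul_conj b
    rw [h4, normSq_eq_norm_sq]; push_cast; ring
  have e1 : ((Complex.normSq b : ℂ) - 1) = ((‖b‖^2 - 1 : ℝ) : ℂ) := by
    rw [normSq_eq_norm_sq]; push_cast; ring
  have e2 : ((Complex.normSq a : ℂ) - 1) = ((‖a‖^2 - 1 : ℝ) : ℂ) := by
    rw [normSq_eq_norm_sq]; push_cast; ring
  rw [e1, e2, hbb] at hschwarz
  simp only [mul_zero, sub_zero, one_pow, div_one, norm_mul, norm_div, norm_pow,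
    Complex.norm_real, Real.norm_eq_abs] at hschwarz
  rw [_root_.abs_of_nonpos (by nlinarith : ‖b‖^2 - 1 ≤ 0),
    _root_.abs_of_nonpos (by nlinarith : ‖a‖^2 - 1 ≤ 0),
    _root_.abs_of_nonneg hb2.le] at hschwarz
  have h3 : ‖deriv f a‖ * (1 - ‖a‖^2) / (1 - ‖b‖^2) ≤ 1 := by
    have heq : ‖deriv f a‖ * (1 - ‖a‖^2) / (1 - ‖b‖^2)
        = -(‖b‖^2 - 1) / (1 - ‖b‖^2)^2 * (‖deriv f a‖ * -(‖a‖^2 - 1)) := by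
      rw [div_mul_eq_mul_div, div_eq_div_iff hb2.ne' (pow_ne_zero 2 hb2.ne')]; ring
    rw [heq]; exact hschwarz
  rw [div_le_one hb2] at h3
  exact h3

end SPAux


open Complex Metric Set Filter in
/-- Lower bound for the Laplacian of the diagonal reproducing kernel
`k(z,z) = (1-|θ(z)|²)/(1-|z|²)`:
`Δ k(z,z) ≥ 4 (|z|-|θ(z)|)² (1-|θ(z)|²)/(1-|z|²)³`. -/
theorem laplacian_diag_kernel_lower
    (θ : ℂ → ℂ) (hθ : DifferentiableOn ℂ θ (Metric.ball 0 1))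
    (hb : ∀ z ∈ Metric.ball (0:ℂ) 1, ‖θ z‖ ≤ 1) :
    ∀ z ∈ Metric.ball (0:ℂ) 1,
      4 * (‖z‖ - ‖θ z‖) ^ 2 * (1 - ‖θ z‖ ^ 2) / (1 - ‖z‖ ^ 2) ^ 3 ≤
        planarLaplacian (fun w => (1 - ‖θ w‖ ^ 2) / (1 - ‖w‖ ^ 2)) z := by
  intro z hz
  rw [LapAux.U_eq θ, LapAux.lap_eq hθ hz]
  have hz' : ‖z‖ < 1 := mem_ball_zero_iff.mp hz
  have hnz2 : ‖z‖^2 = z.re^2 + z.im^2 := by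
    rw [Complex.sq_norm, Complex.normSq_apply]; ring
  have hB : (0:ℝ) < 1 - z.re^2 - z.im^2 := LapAux.hB_pos hz
  set t := θ z with ht_def
  set d := deriv θ z with hd_def
  have ht1 : ‖t‖ ≤ 1 := hb z hz
  have hre_tt : ((starRingEnd ℂ) t * t).re = ‖t‖^2 := by
    have h4 : (starRingEnd ℂ) t * t = (Complex.normSq t : ℂ) := by
      rw [mul_comm]; exact Complex.mul_conj t
    rw [h4, SPAux.normSq_eq_norm_sq]; exact Complex.ofReal_re _
  have hre_dd : ((starRingEnd ℂ) d * d).re = ‖d‖^2 := by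
    have h4 : (starRingEnd ℂ) d * d = (Complex.normSq d : ℂ) := by
      rw [mul_comm]; exact Complex.mul_conj d
    rw [h4, SPAux.normSq_eq_norm_sq]; exact Complex.ofReal_re _
  have hre_bound : (z * (starRingEnd ℂ) t * d).re ≤ ‖z‖ * ‖t‖ * ‖d‖ := by
    calc (z * (starRingEnd ℂ) t * d).re ≤ ‖z * (starRingEnd ℂ) t * d‖ :=
          Complex.re_le_norm _
      _ = ‖z * (starRingEnd ℂ) t * d‖ := rfl
      _ = ‖z‖ * ‖t‖ * ‖d‖ := by rw [norm_mul, norm_mul]; simp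
  -- Schwarz–Pick via scaling limit
  have hSP : ‖d‖ * (1 - ‖z‖^2) ≤ 1 - ‖t‖^2 := by
    have key : ∀ r : ℝ, r ∈ Ioo (0:ℝ) 1 → r * ‖d‖ * (1 - ‖z‖^2) ≤ 1 - r^2 * ‖t‖^2 := by
      intro r hr
      have hdiff : DifferentiableOn ℂ (fun w => (r:ℂ) * θ w) (ball 0 1) := hθ.const_mul _
      have hmap : MapsTo (fun w => (r:ℂ) * θ w) (ball (0:ℂ) 1) (ball (0:ℂ) 1) := by
        intro w hw
        rw [mem_ball_zero_iff, norm_mul, Complex.norm_real, Real.norm_eq_abs,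
          abs_of_pos hr.1]
        calc r * ‖θ w‖ ≤ r * 1 := mul_le_mul_of_nonneg_left (hb w hw) hr.1.le
          _ < 1 := by simpa using hr.2
      have h6 := SPAux.schwarz_pick hdiff hmap hz
      have hder : deriv (fun w => (r:ℂ) * θ w) z = (r:ℂ) * d := by
        rw [deriv_const_mul _ (hθ.differentiableAt (isOpen_ball.mem_nhds hz))]
      rw [hder] at h6
      have h7 : ‖(r:ℂ) * d‖ = r * ‖d‖ := by
        rw [norm_mul, Complex.norm_real, Real.norm_eq_abs, abs_of_pos hr.1]
      have h8 : ‖(r:ℂ) * t‖^2 = r^2 * ‖t‖^2 := by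
        rw [norm_mul, Complex.norm_real, Real.norm_eq_abs, abs_of_pos hr.1]; ring
      rw [h7] at h6
      calc r * ‖d‖ * (1 - ‖z‖^2) ≤ 1 - ‖(r:ℂ) * θ z‖^2 := h6
        _ = 1 - r^2 * ‖t‖^2 := by rw [← ht_def, h8]
    have h7 : Tendsto (fun r : ℝ => r * ‖d‖ * (1 - ‖z‖^2)) (nhdsWithin 1 (Iio 1))
        (nhds (‖d‖ * (1 - ‖z‖^2))) := by
      have : Tendsto (fun r : ℝ => r * ‖d‖ * (1 - ‖z‖^2)) (nhds 1)
          (nhds (1 * ‖d‖ * (1 - ‖z‖^2))) := by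
        exact ((continuous_id.mul continuous_const).mul continuous_const).tendsto 1
      simpa using this.mono_left nhdsWithin_le_nhds
    have h8 : Tendsto (fun r : ℝ => 1 - r^2 * ‖t‖^2) (nhdsWithin 1 (Iio 1))
        (nhds (1 - ‖t‖^2)) := by
      have : Tendsto (fun r : ℝ => 1 - r^2 * ‖t‖^2) (nhds 1)
          (nhds (1 - 1^2 * ‖t‖^2)) := by
        exact (continuous_const.sub ((continuous_pow 2).mul continuous_const)).tendsto 1
      simpa using this.mono_left nhdsWithin_le_nhds
    refine le_of_tendsto_of_tendsto h7 h8 ?_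
    filter_upwards [Ioo_mem_nhdsLT_of_mem (⟨zero_lt_one, le_rfl⟩ : (1:ℝ) ∈ Ioc 0 1)] with r hr
    exact key r hr
  -- final comparison
  have hBeq : 1 - ‖z‖^2 = 1 - z.re^2 - z.im^2 := by rw [hnz2]; ring
  rw [hBeq] at hSP ⊢
  rw [div_le_div_iff_of_pos_right (by positivity)]
  rw [hre_tt, hre_dd]
  have hA0 : (0:ℝ) ≤ 1 - ‖t‖^2 := by nlinarith [norm_nonneg t]
  have hups : (z * (starRingEnd ℂ) t * d).re * (1 - z.re^2 - z.im^2)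
      ≤ ‖z‖ * ‖t‖ * ‖d‖ * (1 - z.re^2 - z.im^2) :=
    mul_le_mul_of_nonneg_right hre_bound hB.le
  have hSPn : (0:ℝ) ≤ 1 - ‖t‖^2 - ‖d‖ * (1 - z.re^2 - z.im^2) := by linarith
  have h1r : 1 + z.re^2 + z.im^2 = 1 + ‖z‖^2 := by rw [hnz2]; ring
  rw [h1r, hnz2]
  nlinarith [mul_nonneg hSPn (add_nonneg hA0 (mul_nonneg (norm_nonneg d) hB.le)),
    mul_nonneg (mul_nonneg (mul_nonneg (norm_nonneg z) (norm_nonneg t)) hB.le) hSPn,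
    mul_nonneg (mul_nonneg (norm_nonneg z) (norm_nonneg t)) hSPn,
    hups, norm_nonneg z, norm_nonneg t, norm_nonneg d, hz', ht1, hB,
    sq_nonneg (‖z‖ - ‖t‖), sq_nonneg (‖z‖ + ‖t‖)]
end

section
/- For a holomorphic self-map θ of the unit disk, the identity (1/4)Δ[z ↦ (1-|θ(z)|²)/(1-|z|²)] = (1+|z|²)(1-|θ(z)|²)/(1-|z|²)³ − 2Re(z·conj(θ(z))·θ'(z))/(1-|z|²)² − |θ'(z)|²/(1-|z|²) holds for all z in the open unit disk. -/
open Complex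

private lemma normsq_c (a : ℂ) : ‖a‖^2 = a.re^2 + a.im^2 := by
  rw [Complex.sq_norm, Complex.normSq_apply]; ring

private lemma lineX {φ : ℂ → ℂ} {d : ℂ} (x c : ℝ) (h : HasDerivAt φ d (↑x + ↑c*I)) :
    HasDerivAt (fun x' : ℝ => φ (↑x' + ↑c*I)) d x := by
  have h0 : HasDerivAt (fun u : ℂ => u + ↑c*I) 1 ↑x := (hasDerivAt_id _).add_const _
  have h1 := h.comp (↑x : ℂ) h0
  simpa [Function.comp] using h1.comp_ofReal

private lemma lineY {φ : ℂ → ℂ} {d : ℂ} (x c : ℝ) (h : HasDerivAt φ d (↑x + ↑c*I)) :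
    HasDerivAt (fun c' : ℝ => φ (↑x + ↑c'*I)) (d * I) c := by
  have h0 : HasDerivAt (fun u : ℂ => ↑x + u*I) I ↑c := by
    simpa using ((hasDerivAt_id (↑c : ℂ)).mul_const I).const_add (↑x : ℂ)
  have h1 := h.comp (↑c : ℂ) h0
  simpa [Function.comp] using h1.comp_ofReal

private lemma hdRe {f : ℝ → ℂ} {d : ℂ} {t : ℝ} (h : HasDerivAt f d t) :
    HasDerivAt (fun x => (f x).re) d.re t := by
  exact (Complex.reCLM.hasFDerivAt.comp_hasDerivAt t h)

private lemma hdIm {f : ℝ → ℂ} {d : ℂ} {t : ℝ} (h : HasDerivAt f d t) :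
    HasDerivAt (fun x => (f x).im) d.im t := by
  exact (Complex.imCLM.hasFDerivAt.comp_hasDerivAt t h)

noncomputable def DX (θ : ℂ → ℂ) (x c : ℝ) : ℝ :=
  (-(2*(θ (↑x + ↑c*Complex.I)).re * (deriv θ (↑x + ↑c*Complex.I)).re
     + 2*(θ (↑x + ↑c*Complex.I)).im * (deriv θ (↑x + ↑c*Complex.I)).im) * (1 - (x^2 + c^2))
   + (1 - ((θ (↑x + ↑c*Complex.I)).re^2 + (θ (↑x + ↑c*Complex.I)).im^2)) * (2*x))
  / (1 - (x^2 + c^2))^2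

noncomputable def DY (θ : ℂ → ℂ) (x c : ℝ) : ℝ :=
  ((2*(θ (↑x + ↑c*Complex.I)).re * (deriv θ (↑x + ↑c*Complex.I)).im
     - 2*(θ (↑x + ↑c*Complex.I)).im * (deriv θ (↑x + ↑c*Complex.I)).re) * (1 - (x^2 + c^2))
   + (1 - ((θ (↑x + ↑c*Complex.I)).re^2 + (θ (↑x + ↑c*Complex.I)).im^2)) * (2*c))
  / (1 - (x^2 + c^2))^2

noncomputable def EX (θ : ℂ → ℂ) (x c : ℝ) : ℝ :=
  ((-(2*(deriv θ (↑x + ↑c*Complex.I)).re^2 + 2*(deriv θ (↑x + ↑c*Complex.I)).im^2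
      + 2*(θ (↑x + ↑c*Complex.I)).re*(deriv (deriv θ) (↑x + ↑c*Complex.I)).re
      + 2*(θ (↑x + ↑c*Complex.I)).im*(deriv (deriv θ) (↑x + ↑c*Complex.I)).im) * (1 - (x^2+c^2))
    + 2*(1 - ((θ (↑x + ↑c*Complex.I)).re^2 + (θ (↑x + ↑c*Complex.I)).im^2))) * (1 - (x^2+c^2))^2
   + (-(2*(θ (↑x + ↑c*Complex.I)).re*(deriv θ (↑x + ↑c*Complex.I)).re
       + 2*(θ (↑x + ↑c*Complex.I)).im*(deriv θ (↑x + ↑c*Complex.I)).im) * (1 - (x^2+c^2))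
      + (1 - ((θ (↑x + ↑c*Complex.I)).re^2 + (θ (↑x + ↑c*Complex.I)).im^2))*(2*x)) * (4*x*(1 - (x^2+c^2))))
  / (1 - (x^2+c^2))^4

noncomputable def EY (θ : ℂ → ℂ) (x c : ℝ) : ℝ :=
  ((-(2*(deriv θ (↑x + ↑c*Complex.I)).re^2 + 2*(deriv θ (↑x + ↑c*Complex.I)).im^2
      - 2*(θ (↑x + ↑c*Complex.I)).re*(deriv (deriv θ) (↑x + ↑c*Complex.I)).re
      - 2*(θ (↑x + ↑c*Complex.I)).im*(deriv (deriv θ) (↑x + ↑c*Complex.I)).im) * (1 - (x^2+c^2))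
    + 2*(1 - ((θ (↑x + ↑c*Complex.I)).re^2 + (θ (↑x + ↑c*Complex.I)).im^2))) * (1 - (x^2+c^2))^2
   + ((2*(θ (↑x + ↑c*Complex.I)).re*(deriv θ (↑x + ↑c*Complex.I)).im
       - 2*(θ (↑x + ↑c*Complex.I)).im*(deriv θ (↑x + ↑c*Complex.I)).re) * (1 - (x^2+c^2))
      + (1 - ((θ (↑x + ↑c*Complex.I)).re^2 + (θ (↑x + ↑c*Complex.I)).im^2))*(2*c)) * (4*c*(1 - (x^2+c^2))))
  / (1 - (x^2+c^2))^4

private lemma ball_sq {x c : ℝ} (h : (↑x + ↑c*I) ∈ Metric.ball (0:ℂ) 1) :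
    1 - (x^2 + c^2) ≠ 0 := by
  have h1 : ‖(↑x + ↑c*I : ℂ)‖ < 1 := by simpa using Metric.mem_ball.mp h
  have h2 : ‖(↑x + ↑c*I : ℂ)‖^2 < 1 := by
    nlinarith [norm_nonneg (↑x + ↑c*I : ℂ)]
  rw [normsq_c] at h2
  simp only [Complex.add_re, Complex.ofReal_re, Complex.mul_re, Complex.I_re,
    Complex.ofReal_im, Complex.I_im, Complex.add_im, Complex.mul_im] at h2
  nlinarith

private lemma hBd (x c : ℝ) : HasDerivAt (fun x' : ℝ => 1 - (x'^2 + c^2)) (-(2*x)) x := by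
  have := ((hasDerivAt_pow 2 x).add_const (c^2)).const_sub 1
  refine this.congr_deriv ?_
  push_cast; ring

private lemma LXlem (θ : ℂ → ℂ) (x c : ℝ) (hw : (↑x + ↑c*I) ∈ Metric.ball (0:ℂ) 1)
    (h1 : HasDerivAt θ (deriv θ (↑x + ↑c*I)) (↑x + ↑c*I)) :
    HasDerivAt (fun x' : ℝ => (1 - ‖θ (↑x' + ↑c*I)‖^2)/(1 - ‖(↑x' + ↑c*I : ℂ)‖^2))
      (DX θ x c) x := by
  have hp : HasDerivAt (fun x' : ℝ => (θ (↑x' + ↑c*I)).re) (deriv θ (↑x + ↑c*I)).re x :=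
    hdRe (lineX x c h1)
  have hq : HasDerivAt (fun x' : ℝ => (θ (↑x' + ↑c*I)).im) (deriv θ (↑x + ↑c*I)).im x :=
    hdIm (lineX x c h1)
  have hA : HasDerivAt
      (fun x' : ℝ => 1 - ((θ (↑x' + ↑c*I)).re^2 + (θ (↑x' + ↑c*I)).im^2))
      (-(2*(θ (↑x + ↑c*I)).re * (deriv θ (↑x + ↑c*I)).re
         + 2*(θ (↑x + ↑c*I)).im * (deriv θ (↑x + ↑c*I)).im)) x := by
    have := ((hp.pow 2).add (hq.pow 2)).const_sub 1
    refine this.congr_deriv ?_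
    push_cast; ring
  have hne := ball_sq hw
  have hdiv := hA.div (hBd x c) hne
  have hfun : (fun x' : ℝ => (1 - ‖θ (↑x' + ↑c*I)‖^2)/(1 - ‖(↑x' + ↑c*I : ℂ)‖^2))
      = (fun x' : ℝ => (1 - ((θ (↑x' + ↑c*I)).re^2 + (θ (↑x' + ↑c*I)).im^2))/(1 - (x'^2 + c^2))) := by
    funext t
    rw [normsq_c, normsq_c]
    simp
  rw [hfun]
  refine hdiv.congr_deriv ?_
  rw [DX]
  ring

private lemma LYlem (θ : ℂ → ℂ) (x c : ℝ) (hw : (↑x + ↑c*I) ∈ Metric.ball (0:ℂ) 1)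
    (h1 : HasDerivAt θ (deriv θ (↑x + ↑c*I)) (↑x + ↑c*I)) :
    HasDerivAt (fun c' : ℝ => (1 - ‖θ (↑x + ↑c'*I)‖^2)/(1 - ‖(↑x + ↑c'*I : ℂ)‖^2))
      (DY θ x c) c := by
  have hp : HasDerivAt (fun c' : ℝ => (θ (↑x + ↑c'*I)).re)
      (-(deriv θ (↑x + ↑c*I)).im) c := by
    simpa using hdRe (lineY x c h1)
  have hq : HasDerivAt (fun c' : ℝ => (θ (↑x + ↑c'*I)).im)
      ((deriv θ (↑x + ↑c*I)).re) c := by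
    simpa using hdIm (lineY x c h1)
  have hA : HasDerivAt
      (fun c' : ℝ => 1 - ((θ (↑x + ↑c'*I)).re^2 + (θ (↑x + ↑c'*I)).im^2))
      (2*(θ (↑x + ↑c*I)).re * (deriv θ (↑x + ↑c*I)).im
         - 2*(θ (↑x + ↑c*I)).im * (deriv θ (↑x + ↑c*I)).re) c := by
    have := ((hp.pow 2).add (hq.pow 2)).const_sub 1
    refine this.congr_deriv ?_
    push_cast; ring
  have hne := ball_sq hw
  have hB' : HasDerivAt (fun c' : ℝ => 1 - (x^2 + c'^2)) (-(2*c)) c := by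
    have := ((hasDerivAt_pow 2 c).const_add (x^2)).const_sub 1
    refine this.congr_deriv ?_
    push_cast; ring
  have hne' : 1 - (x^2 + c^2) ≠ 0 := hne
  have hdiv := hA.div hB' hne'
  have hfun : (fun c' : ℝ => (1 - ‖θ (↑x + ↑c'*I)‖^2)/(1 - ‖(↑x + ↑c'*I : ℂ)‖^2))
      = (fun c' : ℝ => (1 - ((θ (↑x + ↑c'*I)).re^2 + (θ (↑x + ↑c'*I)).im^2))/(1 - (x^2 + c'^2))) := by
    funext t
    rw [normsq_c, normsq_c]
    simp
  rw [hfun]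
  refine hdiv.congr_deriv ?_
  rw [DY]
  ring

private lemma LX2lem (θ : ℂ → ℂ) (x c : ℝ) (hw : (↑x + ↑c*I) ∈ Metric.ball (0:ℂ) 1)
    (h1 : HasDerivAt θ (deriv θ (↑x + ↑c*I)) (↑x + ↑c*I))
    (h2 : HasDerivAt (deriv θ) (deriv (deriv θ) (↑x + ↑c*I)) (↑x + ↑c*I)) :
    HasDerivAt (fun x' : ℝ => DX θ x' c) (EX θ x c) x := by
  have hp : HasDerivAt (fun x' : ℝ => (θ (↑x' + ↑c*I)).re) (deriv θ (↑x + ↑c*I)).re x :=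
    hdRe (lineX x c h1)
  have hq : HasDerivAt (fun x' : ℝ => (θ (↑x' + ↑c*I)).im) (deriv θ (↑x + ↑c*I)).im x :=
    hdIm (lineX x c h1)
  have hp1 : HasDerivAt (fun x' : ℝ => (deriv θ (↑x' + ↑c*I)).re)
      (deriv (deriv θ) (↑x + ↑c*I)).re x := hdRe (lineX x c h2)
  have hq1 : HasDerivAt (fun x' : ℝ => (deriv θ (↑x' + ↑c*I)).im)
      (deriv (deriv θ) (↑x + ↑c*I)).im x := hdIm (lineX x c h2)
  have hne := ball_sq hw
  have hNum := ((((hp.const_mul 2).mul hp1).add ((hq.const_mul 2).mul hq1)).neg.mul (hBd x c)).add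
    ((((hp.pow 2).add (hq.pow 2)).const_sub 1).mul ((hasDerivAt_id x).const_mul 2))
  have hDen := (hBd x c).pow 2
  have hne2 : (1 - (x^2 + c^2))^2 ≠ 0 := pow_ne_zero _ hne
  have hdiv := hNum.div hDen hne2
  have hfun : (fun x' : ℝ => DX θ x' c)
      = (fun x' : ℝ => (-(2*(θ (↑x' + ↑c*I)).re * (deriv θ (↑x' + ↑c*I)).re
          + 2*(θ (↑x' + ↑c*I)).im * (deriv θ (↑x' + ↑c*I)).im) * (1 - (x'^2 + c^2))
        + (1 - ((θ (↑x' + ↑c*I)).re^2 + (θ (↑x' + ↑c*I)).im^2)) * (2*x'))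
        / (1 - (x'^2 + c^2))^2) := by
    funext t; rw [DX]
  rw [hfun]
  refine hdiv.congr_deriv ?_
  rw [EX]
  simp only [Pi.pow_apply, Pi.mul_apply, Pi.add_apply, Pi.sub_apply, Pi.neg_apply, id]
  field_simp
  ring

private lemma LY2lem (θ : ℂ → ℂ) (x c : ℝ) (hw : (↑x + ↑c*I) ∈ Metric.ball (0:ℂ) 1)
    (h1 : HasDerivAt θ (deriv θ (↑x + ↑c*I)) (↑x + ↑c*I))
    (h2 : HasDerivAt (deriv θ) (deriv (deriv θ) (↑x + ↑c*I)) (↑x + ↑c*I)) :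
    HasDerivAt (fun c' : ℝ => DY θ x c') (EY θ x c) c := by
  have hp : HasDerivAt (fun c' : ℝ => (θ (↑x + ↑c'*I)).re)
      (-(deriv θ (↑x + ↑c*I)).im) c := by simpa using hdRe (lineY x c h1)
  have hq : HasDerivAt (fun c' : ℝ => (θ (↑x + ↑c'*I)).im)
      ((deriv θ (↑x + ↑c*I)).re) c := by simpa using hdIm (lineY x c h1)
  have hp1 : HasDerivAt (fun c' : ℝ => (deriv θ (↑x + ↑c'*I)).re)
      (-(deriv (deriv θ) (↑x + ↑c*I)).im) c := by simpa using hdRe (lineY x c h2)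
  have hq1 : HasDerivAt (fun c' : ℝ => (deriv θ (↑x + ↑c'*I)).im)
      ((deriv (deriv θ) (↑x + ↑c*I)).re) c := by simpa using hdIm (lineY x c h2)
  have hne := ball_sq hw
  have hB' : HasDerivAt (fun c' : ℝ => 1 - (x^2 + c'^2)) (-(2*c)) c := by
    have := ((hasDerivAt_pow 2 c).const_add (x^2)).const_sub 1
    refine this.congr_deriv ?_
    push_cast; ring
  have hNum := ((((hp.const_mul 2).mul hq1).sub ((hq.const_mul 2).mul hp1)).mul hB').add
    ((((hp.pow 2).add (hq.pow 2)).const_sub 1).mul ((hasDerivAt_id c).const_mul 2))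
  have hDen := hB'.pow 2
  have hne2 : (1 - (x^2 + c^2))^2 ≠ 0 := pow_ne_zero _ hne
  have hdiv := hNum.div hDen hne2
  have hfun : (fun c' : ℝ => DY θ x c')
      = (fun c' : ℝ => ((2*(θ (↑x + ↑c'*I)).re * (deriv θ (↑x + ↑c'*I)).im
          - 2*(θ (↑x + ↑c'*I)).im * (deriv θ (↑x + ↑c'*I)).re) * (1 - (x^2 + c'^2))
        + (1 - ((θ (↑x + ↑c'*I)).re^2 + (θ (↑x + ↑c'*I)).im^2)) * (2*c'))
        / (1 - (x^2 + c'^2))^2) := by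
    funext t; rw [DY]
  rw [hfun]
  refine hdiv.congr_deriv ?_
  rw [EY]
  simp only [Pi.pow_apply, Pi.mul_apply, Pi.add_apply, Pi.sub_apply, Pi.neg_apply, id]
  field_simp
  ring

/-- The identity
`(1/4)Δ[(1-|θ|²)/(1-|z|²)] = (1+|z|²)(1-|θ(z)|²)/(1-|z|²)³
  − 2Re(z·conj(θ(z))·θ'(z))/(1-|z|²)² − |θ'(z)|²/(1-|z|²)`
for a holomorphic self-map `θ` of the unit disk. -/
theorem laplacian_diag_kernel_identity
    (θ : ℂ → ℂ) (hθ : DifferentiableOn ℂ θ (Metric.ball 0 1))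
    (hmaps : Set.MapsTo θ (Metric.ball 0 1) (Metric.ball 0 1)) :
    ∀ z ∈ Metric.ball (0:ℂ) 1,
      (1 / 4) * planarLaplacian (fun w => (1 - ‖θ w‖ ^ 2) / (1 - ‖w‖ ^ 2)) z =
        (1 + ‖z‖ ^ 2) * (1 - ‖θ z‖ ^ 2) / (1 - ‖z‖ ^ 2) ^ 3 -
        2 * (z * (starRingEnd ℂ) (θ z) * deriv θ z).re / (1 - ‖z‖ ^ 2) ^ 2 -
        ‖deriv θ z‖ ^ 2 / (1 - ‖z‖ ^ 2) := by
  intro z hz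
  have hopen : IsOpen (Metric.ball (0:ℂ) 1) := Metric.isOpen_ball
  have hd1 : ∀ w ∈ Metric.ball (0:ℂ) 1, HasDerivAt θ (deriv θ w) w := fun w hw =>
    (hθ.differentiableAt (hopen.mem_nhds hw)).hasDerivAt
  have hA : AnalyticOnNhd ℂ θ (Metric.ball (0:ℂ) 1) := hθ.analyticOnNhd hopen
  have hd2 : ∀ w ∈ Metric.ball (0:ℂ) 1, HasDerivAt (deriv θ) (deriv (deriv θ) w) w := fun w hw =>
    ((hA.deriv w hw).differentiableAt).hasDerivAt
  have hzw : ((↑z.re + ↑z.im*I : ℂ)) = z := Complex.re_add_im z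
  have hzball : (↑z.re + ↑z.im*I : ℂ) ∈ Metric.ball (0:ℂ) 1 := by rwa [hzw]
  -- x-direction
  have hopenx : IsOpen {t : ℝ | (↑t + ↑z.im*I : ℂ) ∈ Metric.ball (0:ℂ) 1} :=
    hopen.preimage (by continuity)
  have hmemx : z.re ∈ {t : ℝ | (↑t + ↑z.im*I : ℂ) ∈ Metric.ball (0:ℂ) 1} := hzball
  have hevx : (deriv fun x' : ℝ => (1 - ‖θ (↑x' + ↑z.im*I)‖^2)/(1 - ‖(↑x' + ↑z.im*I : ℂ)‖^2))
      =ᶠ[nhds z.re] (fun x => DX θ x z.im) := by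
    filter_upwards [hopenx.mem_nhds hmemx] with t ht
    exact (LXlem θ t z.im ht (hd1 _ ht)).deriv
  have ex : deriv (deriv fun x' : ℝ => (1 - ‖θ (↑x' + ↑z.im*I)‖^2)/(1 - ‖(↑x' + ↑z.im*I : ℂ)‖^2)) z.re
      = EX θ z.re z.im := by
    rw [hevx.deriv_eq]
    exact (LX2lem θ z.re z.im hzball (hd1 _ hzball) (hd2 _ hzball)).deriv
  -- y-direction
  have hopeny : IsOpen {t : ℝ | (↑z.re + ↑t*I : ℂ) ∈ Metric.ball (0:ℂ) 1} :=
    hopen.preimage (by continuity)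
  have hmemy : z.im ∈ {t : ℝ | (↑z.re + ↑t*I : ℂ) ∈ Metric.ball (0:ℂ) 1} := hzball
  have hevy : (deriv fun y' : ℝ => (1 - ‖θ (↑z.re + ↑y'*I)‖^2)/(1 - ‖(↑z.re + ↑y'*I : ℂ)‖^2))
      =ᶠ[nhds z.im] (fun y => DY θ z.re y) := by
    filter_upwards [hopeny.mem_nhds hmemy] with t ht
    exact (LYlem θ z.re t ht (hd1 _ ht)).deriv
  have ey : deriv (deriv fun y' : ℝ => (1 - ‖θ (↑z.re + ↑y'*I)‖^2)/(1 - ‖(↑z.re + ↑y'*I : ℂ)‖^2)) z.im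
      = EY θ z.re z.im := by
    rw [hevy.deriv_eq]
    exact (LY2lem θ z.re z.im hzball (hd1 _ hzball) (hd2 _ hzball)).deriv
  have hlap : planarLaplacian (fun w => (1 - ‖θ w‖ ^ 2) / (1 - ‖w‖ ^ 2)) z
      = EX θ z.re z.im + EY θ z.re z.im := by
    rw [planarLaplacian, ← ex, ← ey]
  rw [hlap]
  -- final algebraic identity
  have hne : 1 - (z.re^2 + z.im^2) ≠ 0 := ball_sq hzball
  have hpos : 0 < 1 - (z.re^2 + z.im^2) := by
    have h1 : ‖z‖ < 1 := by simpa using Metric.mem_ball.mp hz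
    have h2 : ‖z‖^2 < 1 := by nlinarith [norm_nonneg z]
    rw [normsq_c] at h2
    linarith
  rw [EX, EY, hzw, normsq_c z, normsq_c (θ z), normsq_c (deriv θ z)]
  simp only [Complex.mul_re, Complex.mul_im, Complex.conj_re, Complex.conj_im]
  field_simp
  ring
end
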